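/- Every directed Archimedean partially ordered vector space X is a pre-Riesz space: for all x, y, z ∈ X, if every upper bound of {y, z} that can be written is such that {x+y, x+z}^u ⊆ {y, z}^u, then x ≥ 0. -/

import Mathlib

/-- Every directed Archimedean partially ordered vector space is pre-Riesz:
if `{x+y, x+z}ᵘ ⊆ {y, z}ᵘ` then `0 ≤ x`. -/
theorem stmt2 {X : Type*} [AddCommGroup X] [PartialOrder X] [IsOrderedAddMonoid X]
    [Module ℝ X] [PosSMulStrictMono ℝ X]
    (hdir : ∀ x : X, ∃ y z : X, 0 ≤ y ∧ 0 ≤ z ∧ x = y - z)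
    (harch : ∀ x y : X, (∀ n : ℕ, n • x ≤ y) → x ≤ 0)
    (x y z : X)
    (h : upperBounds {x + y, x + z} ⊆ upperBounds {y, z}) : 0 ≤ x := by
  obtain ⟨p, q, hp, hq, hpq⟩ := hdir (y - z)
  set w := z + p with hw
  have hwz : z ≤ w := le_add_of_nonneg_right hp
  have hwy : y ≤ w := by
    have h1 : y - z ≤ p := by rw [hpq]; exact sub_le_self _ hq
    exact sub_le_iff_le_add'.mp h1
  have key : ∀ n : ℕ, n • x + w ∈ upperBounds {y, z} := by
    intro n
    induction n with
    | zero =>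
        simp only [zero_smul, zero_add]
        rintro a (rfl | rfl)
        · exact hwy
        · exact hwz
    | succ n ih =>
        have hmem : x + (n • x + w) ∈ upperBounds {x + y, x + z} := by
          rintro a (rfl | rfl)
          · exact add_le_add_right (ih (a := y) (by simp)) x
          · exact add_le_add_right (ih (a := z) (by simp)) x
        have := h hmem
        have heq : (n + 1) • x + w = x + (n • x + w) := by
          rw [succ_nsmul]; abel
        rw [heq]
        exact this
  have harx : ∀ n : ℕ, n • (-x) ≤ w - y := by
    intro n
    have hy : y ≤ n • x + w := key n (by simp)
    have : -(n • x) ≤ w - y := by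
      have := sub_le_sub_right hy (n • x + y)
      simpa [sub_eq_add_neg, add_comm, add_left_comm, add_assoc] using this
    simpa [neg_nsmul] using this
  have := harch (-x) (w - y) harx
  exact neg_nonpos.mp this
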